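/- Let m ∈ ℕ, let F : EuclideanSpace ℝ (Fin m) → EuclideanSpace ℝ (Fin m), let φ, ψ : ℝ → ℝ, and let x₀ ∈ EuclideanSpace ℝ (Fin m), t₀ ∈ ℝ. Assume F is differentiable at x₀, φ is differentiable at t₀, ψ is differentiable at ‖x₀‖², and that deriv φ t₀ · ψ (‖x₀‖²) = 1. Define G (x, t) = (F x, t − φ t · ψ (‖x‖²)). Then (x₀, t₀) is a critical point of G: det (fderiv ℝ G (x₀, t₀)) = 0. -/

import Mathlib

lemma det_zero_of_ker {E : Type*} [NormedAddCommGroup E] [NormedSpace ℝ E]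
    [FiniteDimensional ℝ E] (D : E →L[ℝ] E) (v : E) (hv : v ≠ 0) (h : D v = 0) :
    D.det = 0 := by
  by_contra hdet
  have hinj := (LinearMap.equivOfDetNeZero (D : E →ₗ[ℝ] E) hdet).injective
  exact hv (by simpa using hinj (a₁ := v) (a₂ := 0) (by simpa using h))

/-- Existence of critical points for the perturbed map (Lemma 4.2): if
`φ'(t₀) · ψ(‖x₀‖²) = 1`, then `(x₀, t₀)` is a critical point of
`G (x, t) = (F x, t − φ t · ψ (‖x‖²))`, i.e. the determinant of its Jacobian vanishes. -/
theorem critical_point_of_perturbation {m : ℕ}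
    (F : EuclideanSpace ℝ (Fin m) → EuclideanSpace ℝ (Fin m))
    (φ ψ : ℝ → ℝ) (x₀ : EuclideanSpace ℝ (Fin m)) (t₀ : ℝ)
    (hF : DifferentiableAt ℝ F x₀) (hφ : DifferentiableAt ℝ φ t₀)
    (hψ : DifferentiableAt ℝ ψ (‖x₀‖ ^ 2))
    (hcrit : deriv φ t₀ * ψ (‖x₀‖ ^ 2) = 1)
    (G : EuclideanSpace ℝ (Fin m) × ℝ → EuclideanSpace ℝ (Fin m) × ℝ)
    (hG : ∀ x t, G (x, t) = (F x, t - φ t * ψ (‖x‖ ^ 2))) :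
    (fderiv ℝ G (x₀, t₀)).det = 0 := by
  have hGfun : G = fun p : EuclideanSpace ℝ (Fin m) × ℝ =>
      (F p.1, p.2 - φ p.2 * ψ (‖p.1‖ ^ 2)) := by
    funext p; obtain ⟨x, t⟩ := p; exact hG x t
  have hfst : HasFDerivAt (fun p : EuclideanSpace ℝ (Fin m) × ℝ => p.1)
      (ContinuousLinearMap.fst ℝ (EuclideanSpace ℝ (Fin m)) ℝ) (x₀, t₀) := hasFDerivAt_fst
  have h1 := hF.hasFDerivAt.comp (x₀, t₀) hfst
  have hns := hfst.norm_sq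
  have hψc := hψ.hasDerivAt.comp_hasFDerivAt (x₀, t₀) hns
  have hφc := hφ.hasDerivAt.comp_hasFDerivAt (x₀, t₀)
    (hasFDerivAt_snd (𝕜 := ℝ) (E := EuclideanSpace ℝ (Fin m)) (F := ℝ) (p := (x₀, t₀)))
  have h2 := (hasFDerivAt_snd (𝕜 := ℝ) (E := EuclideanSpace ℝ (Fin m)) (F := ℝ)
    (p := (x₀, t₀))).sub (hφc.mul hψc)
  have hD := h1.prodMk h2
  simp only [Function.comp_def, Pi.sub_def, Pi.mul_def] at hD
  rw [← hGfun] at hD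
  apply det_zero_of_ker _ ((0 : EuclideanSpace ℝ (Fin m)), (1 : ℝ))
  · simp [Prod.ext_iff]
  · rw [hD.fderiv]
    simp [ContinuousLinearMap.prod_apply, ContinuousLinearMap.comp_apply,
      ContinuousLinearMap.smul_apply, Function.comp, inner_zero_right, Prod.ext_iff,
      mul_comm (ψ (‖x₀‖ ^ 2)), hcrit]
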